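/- arXiv:math/0612606 — 2 statements merged into one kernel-verified Lean document; each statement's English description precedes it below -/
import Mathlib

section
/- Assume 𝐒 and 𝐒₋₁ are both bounded on 𝐄. Then for every finitely supported φ ∈ ℂ^ℤ, the operator T_φ : x ↦ P⁺(φ∗x) maps 𝐄 boundedly into 𝐄, and |φ̃(z)| ≤ ‖T_φ‖ for every z ∈ ℂ with 1/ρ(𝐒₋₁) ≤ |z| ≤ ρ(𝐒), where φ̃(z) = Σ_n φ(n) zⁿ (a finite sum) and ‖T_φ‖ is the operator norm of T_φ. -/
open scoped ENNReal
open Filter Topology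

private lemma aux_specBound {A : Type*} [NormedRing A] [NormedAlgebra ℂ A] [CompleteSpace A]
    [NormOneClass A] (P T B : A) (D : ℕ)
    (hP : ∀ N : ℕ, ‖P ^ N‖₊ ≤ ‖T‖₊ ^ N * ‖B ^ (N * D)‖₊) :
    spectralRadius ℂ P ≤ (‖T‖₊ : ℝ≥0∞) * (spectralRadius ℂ B) ^ D := by
  rcases Nat.eq_zero_or_pos D with hD | hD
  · subst hD
    have h1 := hP 1
    simp only [pow_one, Nat.mul_zero, pow_zero, nnnorm_one, mul_one] at h1
    calc spectralRadius ℂ P ≤ ‖P‖₊ := spectrum.spectralRadius_le_nnnorm (𝕜 := ℂ) P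
      _ ≤ (‖T‖₊ : ℝ≥0∞) * (spectralRadius ℂ B) ^ 0 := by
          rw [pow_zero, mul_one]; exact_mod_cast h1
  · have hgelfP := spectrum.pow_nnnorm_pow_one_div_tendsto_nhds_spectralRadius P
    have hgelfB := spectrum.pow_nnnorm_pow_one_div_tendsto_nhds_spectralRadius B
    have hcomp : Tendsto (fun n : ℕ => n * D) atTop atTop := by
      apply Filter.tendsto_atTop_atTop.mpr
      intro b
      exact ⟨b, fun n hn => le_trans hn (Nat.le_mul_of_pos_right n hD)⟩
    have hB' : Tendsto (fun n : ℕ => ((‖B ^ (n * D)‖₊ : ℝ≥0∞) ^ (1 / ((n * D : ℕ) : ℝ))) ^ D)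
        atTop (𝓝 ((spectralRadius ℂ B) ^ D)) := by
      apply ENNReal.Tendsto.pow
      exact hgelfB.comp hcomp
    have hg : Tendsto (fun n : ℕ => (‖T‖₊ : ℝ≥0∞) *
        ((‖B ^ (n * D)‖₊ : ℝ≥0∞) ^ (1 / ((n * D : ℕ) : ℝ))) ^ D) atTop
        (𝓝 ((‖T‖₊ : ℝ≥0∞) * (spectralRadius ℂ B) ^ D)) :=
      ENNReal.Tendsto.const_mul hB' (Or.inr ENNReal.coe_ne_top)
    refine le_of_tendsto_of_tendsto hgelfP hg ?_
    filter_upwards [eventually_ge_atTop 1] with n hn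
    have hn0 : (0:ℝ) < n := by exact_mod_cast hn
    have hD0 : (0:ℝ) < D := by exact_mod_cast hD
    have key : (‖P ^ n‖₊ : ℝ≥0∞) ≤ ((‖T‖₊ : ℝ≥0∞) ^ n) * ‖B ^ (n * D)‖₊ := by
      exact_mod_cast hP n
    calc (‖P ^ n‖₊ : ℝ≥0∞) ^ (1 / n : ℝ)
        ≤ (((‖T‖₊ : ℝ≥0∞) ^ n) * ‖B ^ (n * D)‖₊) ^ (1 / n : ℝ) :=
          ENNReal.rpow_le_rpow key (by positivity)
      _ = ((‖T‖₊ : ℝ≥0∞) ^ n) ^ (1 / n : ℝ) * (‖B ^ (n * D)‖₊ : ℝ≥0∞) ^ (1 / n : ℝ) :=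
          ENNReal.mul_rpow_of_nonneg _ _ (by positivity)
      _ = (‖T‖₊ : ℝ≥0∞) * ((‖B ^ (n * D)‖₊ : ℝ≥0∞) ^ (1 / ((n * D : ℕ) : ℝ))) ^ D := by
          rw [← ENNReal.rpow_natCast ((‖T‖₊ : ℝ≥0∞)) n, ← ENNReal.rpow_mul,
            ← ENNReal.rpow_natCast ((‖B ^ (n*D)‖₊ : ℝ≥0∞) ^ (1 / ((n*D:ℕ):ℝ))) D,
            ← ENNReal.rpow_mul, mul_one_div, div_self hn0.ne', ENNReal.rpow_one]
          congr 1
          push_cast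
          congr 1
          field_simp

private lemma aux_circle_spec {A : Type*} [NormedRing A] [NormedAlgebra ℂ A] [CompleteSpace A]
    [Nontrivial A] (a : A)
    (hrot : ∀ ζ : ℂ, ‖ζ‖ = 1 → spectrum ℂ (ζ • a) = spectrum ℂ a)
    (z : ℂ) (hz : (‖z‖₊ : ℝ≥0∞) = spectralRadius ℂ a) (hz0 : z ≠ 0) :
    z ∈ spectrum ℂ a := by
  obtain ⟨μ, hμ, hμn⟩ := spectrum.exists_nnnorm_eq_spectralRadius a
  have hnn : ‖μ‖ = ‖z‖ := by
    have h : (‖μ‖₊ : ℝ≥0∞) = (‖z‖₊ : ℝ≥0∞) := hμn.trans hz.symm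
    have h2 : ‖μ‖₊ = ‖z‖₊ := by exact_mod_cast h
    calc ‖μ‖ = (‖μ‖₊ : ℝ) := rfl
      _ = (‖z‖₊ : ℝ) := by rw [h2]
      _ = ‖z‖ := rfl
  have hμ0 : μ ≠ 0 := by
    intro h
    apply hz0
    rw [h, norm_zero] at hnn
    exact norm_eq_zero.mp hnn.symm
  set ζ : ℂ := z / μ with hζdef
  have hζ0 : ζ ≠ 0 := div_ne_zero hz0 hμ0
  have hζ1 : ‖ζ‖ = 1 := by
    rw [hζdef, norm_div, hnn, div_self (norm_ne_zero_iff.mpr hz0)]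
  have hzζμ : z = ζ * μ := by
    rw [hζdef, div_mul_cancel₀ z hμ0]
  have hmem : (Units.mk0 ζ hζ0) • μ ∈ spectrum ℂ ((Units.mk0 ζ hζ0) • a) :=
    (spectrum.smul_mem_smul_iff).mpr hμ
  rw [Units.smul_def, Units.smul_def] at hmem
  simp only [Units.val_mk0] at hmem
  rw [hrot ζ hζ1] at hmem
  rwa [hzζμ, ← smul_eq_mul]

/-- If `𝐒` and `𝐒₋₁` are both bounded on `𝐄`, then for every finitely supported
`φ : ℤ → ℂ` the operator `T_φ : x ↦ P⁺(φ∗x)` maps `𝐄` boundedly into `𝐄`, and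
`|φ̃(z)| ≤ ‖T_φ‖` for every `z` with `1/ρ(𝐒₋₁) ≤ |z| ≤ ρ(𝐒)`. -/
theorem stmt17
    {E : Type*} [NormedAddCommGroup E] [NormedSpace ℂ E] [CompleteSpace E]
    (ι : E →ₗ[ℂ] (ℕ → ℂ)) (hι : Function.Injective ι)
    (e : ℕ → E) (he : ∀ k : ℕ, ι (e k) = Pi.single k 1)
    (hdense : Dense (Submodule.span ℂ (Set.range e) : Set E))
    (hcoord : ∀ n : ℕ, Continuous fun x : E => ι x n)
    (Γ : ℂ → E → E)
    (hΓ : ∀ z : ℂ, ‖z‖ = 1 → ∀ x : E, ∀ n : ℕ, ι (Γ z x) n = z ^ n * ι x n)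
    (hΓbdd : ∃ C : ℝ, ∀ z : ℂ, ‖z‖ = 1 → ∀ x : E, ‖Γ z x‖ ≤ C * ‖x‖)
    -- `𝐒` and `𝐒₋₁` are both bounded, with restrictions `Sop` and `Mop` to `𝐄`:
    (Sop Mop : E →L[ℂ] E)
    (hSop : ∀ x : E, ι (Sop x) 0 = 0 ∧ ∀ n : ℕ, ι (Sop x) (n + 1) = ι x n)
    (hMop : ∀ x : E, ∀ n : ℕ, ι (Mop x) n = ι x (n + 1))
    (φ : ℤ →₀ ℂ) :
    ∃ Tφ : E →L[ℂ] E,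
      (∀ x : E, ∀ m : ℕ, ι (Tφ x) m =
        ∑ j ∈ φ.support, φ j * (if 0 ≤ (m : ℤ) - j then ι x ((m : ℤ) - j).toNat else 0)) ∧
      ∀ z : ℂ, (spectralRadius ℂ Mop)⁻¹ ≤ (‖z‖₊ : ℝ≥0∞) →
        (‖z‖₊ : ℝ≥0∞) ≤ spectralRadius ℂ Sop →
        ‖∑ j ∈ φ.support, φ j * z ^ j‖ ≤ ‖Tφ‖ := by
  classical
  -- E is nontrivial
  have he0 : e 0 ≠ 0 := by
    intro h
    have h1 : ι (e 0) 0 = 1 := by rw [he 0]; simp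
    rw [h, map_zero] at h1
    simp at h1
  haveI : Nontrivial E := ⟨e 0, 0, he0⟩
  have hS0 : ∀ x : E, ι (Sop x) 0 = 0 := fun x => (hSop x).1
  have hSn : ∀ x : E, ∀ n, ι (Sop x) (n + 1) = ι x n := fun x => (hSop x).2
  -- coordinates of powers of the shifts
  have coordS : ∀ (t : ℕ) (x : E) (m : ℕ),
      ι ((Sop ^ t) x) m = if t ≤ m then ι x (m - t) else 0 := by
    intro t
    induction t with
    | zero => intro x m; simp
    | succ t ih =>
      intro x m
      have hps : (Sop ^ (t + 1)) x = (Sop ^ t) (Sop x) := by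
        rw [pow_succ]; rfl
      rw [hps, ih]
      by_cases h1 : t ≤ m
      · rcases Nat.lt_or_ge t m with h2 | h2
        · have hmt : m - t = (m - (t + 1)) + 1 := by omega
          rw [if_pos h1, hmt, hSn, if_pos (by omega)]
        · have hmt : m - t = 0 := by omega
          rw [if_pos h1, hmt, hS0, if_neg (by omega)]
      · rw [if_neg h1, if_neg (by omega)]
  have coordM : ∀ (t : ℕ) (x : E) (m : ℕ), ι ((Mop ^ t) x) m = ι x (m + t) := by
    intro t
    induction t with
    | zero => intro x m; simp
    | succ t ih =>
      intro x m
      have hps : (Mop ^ (t + 1)) x = (Mop ^ t) (Mop x) := by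
        rw [pow_succ]; rfl
      rw [hps, ih, hMop, show m + t + 1 = m + (t + 1) by omega]
  -- extensionality via coordinates
  have extE : ∀ (F G : E →L[ℂ] E), (∀ x n, ι (F x) n = ι (G x) n) → F = G := by
    intro F G h
    ext x
    exact hι (funext (h x))
  have hMS : Mop * Sop = 1 := by
    apply extE
    intro x n
    show ι (Mop (Sop x)) n = ι ((1 : E →L[ℂ] E) x) n
    rw [hMop, hSn]
    rfl
  have hMSpow : ∀ i : ℕ, Mop ^ i * Sop ^ i = 1 := by
    intro i
    induction i with
    | zero => simp
    | succ i ih =>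
      rw [pow_succ, pow_succ', mul_assoc, ← mul_assoc Mop, hMS, one_mul, ih]
  have hMpow_S : ∀ (i D : ℕ), i ≤ D → Mop ^ i * Sop ^ D = Sop ^ (D - i) := by
    intro i D hiD
    have : Sop ^ D = Sop ^ i * Sop ^ (D - i) := by
      rw [← pow_add]; congr 1; omega
    rw [this, ← mul_assoc, hMSpow, one_mul]
  have hM_Spow : ∀ (i D : ℕ), i ≤ D → Mop ^ D * Sop ^ i = Mop ^ (D - i) := by
    intro i D hiD
    have : Mop ^ D = Mop ^ (D - i) * Mop ^ i := by
      rw [← pow_add]; congr 1; omega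
    rw [this, mul_assoc, hMSpow, mul_one]
  -- the degrees
  set Dn : ℕ := φ.support.sup (fun j => (-j).toNat) with hDn
  set Dp : ℕ := φ.support.sup (fun j => j.toNat) with hDp
  have hDnle : ∀ j ∈ φ.support, (-j).toNat ≤ Dn := fun j hj => Finset.le_sup (f := fun j => (-j).toNat) hj
  have hDple : ∀ j ∈ φ.support, j.toNat ≤ Dp := fun j hj => Finset.le_sup (f := fun j => j.toNat) hj
  -- the operator
  set op : ℤ → (E →L[ℂ] E) := fun j => if 0 ≤ j then Sop ^ j.toNat else Mop ^ (-j).toNat with hop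
  set Tφ : E →L[ℂ] E := ∑ j ∈ φ.support, φ j • op j with hTφ
  refine ⟨Tφ, ?_, ?_⟩
  · -- Part 1: coordinate formula
    intro x m
    rw [hTφ, ContinuousLinearMap.sum_apply, map_sum, Finset.sum_apply]
    apply Finset.sum_congr rfl
    intro j hj
    rw [ContinuousLinearMap.smul_apply, map_smul, Pi.smul_apply, smul_eq_mul]
    congr 1
    by_cases h0 : 0 ≤ j
    · rw [hop]
      simp only [if_pos h0]
      rw [coordS]
      by_cases h1 : j.toNat ≤ m
      · rw [if_pos h1, if_pos (show (0:ℤ) ≤ (m : ℤ) - j by omega)]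
        rw [show ((m:ℤ) - j).toNat = m - j.toNat by omega]
      · rw [if_neg h1, if_neg (show ¬ (0:ℤ) ≤ (m : ℤ) - j by omega)]
    · rw [hop]
      simp only [if_neg h0]
      rw [coordM, if_pos (show (0:ℤ) ≤ (m : ℤ) - j by omega)]
      rw [show ((m:ℤ) - j).toNat = m + (-j).toNat by omega]
  · -- Part 2
    intro z hz1 hz2
    set ρS := spectralRadius ℂ Sop with hρS
    set ρM := spectralRadius ℂ Mop with hρM
    have hρSfin : ρS ≠ ⊤ :=
      ((spectrum.spectralRadius_le_nnnorm (𝕜 := ℂ) Sop).trans_lt ENNReal.coe_lt_top).ne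
    have hρMfin : ρM ≠ ⊤ :=
      ((spectrum.spectralRadius_le_nnnorm (𝕜 := ℂ) Mop).trans_lt ENNReal.coe_lt_top).ne
    have hz0 : z ≠ 0 := by
      intro h
      rw [h] at hz1
      simp only [nnnorm_zero, ENNReal.coe_zero, le_zero_iff, ENNReal.inv_eq_zero] at hz1
      exact hρMfin hz1
    have hρS0 : ρS ≠ 0 := by
      intro h
      rw [h] at hz2
      simp only [le_zero_iff, ENNReal.coe_eq_zero, nnnorm_eq_zero] at hz2
      exact hz0 hz2
    have hρM0 : ρM ≠ 0 := by
      intro h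
      rw [h, ENNReal.inv_zero] at hz1
      exact ENNReal.coe_ne_top (top_le_iff.mp hz1)
    -- the membership bound for the spectral radius
    have hmem_le : ∀ (a : E →L[ℂ] E) (w : ℂ), w ∈ spectrum ℂ a →
        (‖w‖₊ : ℝ≥0∞) ≤ spectralRadius ℂ a := by
      intro a w hw
      exact le_iSup₂ (f := fun k (_ : k ∈ spectrum ℂ a) => (‖k‖₊ : ℝ≥0∞)) w hw
    -- Γ as continuous linear maps
    obtain ⟨C, hC⟩ := hΓbdd
    have hΓlin : ∀ w : ℂ, ‖w‖ = 1 → ∃ G : E →L[ℂ] E, ∀ x, G x = Γ w x := by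
      intro w hw
      have hadd : ∀ x y : E, Γ w (x + y) = Γ w x + Γ w y := by
        intro x y
        apply hι
        funext n
        simp only [hΓ w hw, map_add, Pi.add_apply]
        ring
      have hsmul : ∀ (c : ℂ) (x : E), Γ w (c • x) = c • Γ w x := by
        intro c x
        apply hι
        funext n
        simp only [hΓ w hw, map_smul, Pi.smul_apply, smul_eq_mul]
        ring
      exact ⟨LinearMap.mkContinuousOfExistsBound
        { toFun := Γ w, map_add' := hadd, map_smul' := hsmul } ⟨C, hC w hw⟩, fun x => rfl⟩
    have hconj1 : ∀ w : ℂ, ‖w‖ = 1 → w * (starRingEnd ℂ) w = 1 := by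
      intro w hw
      rw [Complex.mul_conj]
      have h1 : Complex.normSq w = 1 := by
        rw [Complex.normSq_eq_norm_sq, hw, one_pow]
      rw [h1]
      simp
    have hunit : ∀ w : ℂ, ‖w‖ = 1 → ∃ u : (E →L[ℂ] E)ˣ,
        (∀ x, (u : E →L[ℂ] E) x = Γ w x) ∧
        (∀ x, ((↑u⁻¹ : E →L[ℂ] E)) x = Γ ((starRingEnd ℂ) w) x) := by
      intro w hw
      have hwc : ‖(starRingEnd ℂ) w‖ = 1 := by rw [RCLike.norm_conj]; exact hw
      obtain ⟨G, hG⟩ := hΓlin w hw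
      obtain ⟨G', hG'⟩ := hΓlin _ hwc
      have h1 : G * G' = 1 := by
        apply extE; intro x n
        show ι (G (G' x)) n = ι ((1 : E →L[ℂ] E) x) n
        rw [hG, hG', hΓ w hw, hΓ _ hwc, ContinuousLinearMap.one_apply,
          ← mul_assoc, ← mul_pow, hconj1 w hw, one_pow, one_mul]
      have h2 : G' * G = 1 := by
        apply extE; intro x n
        show ι (G' (G x)) n = ι ((1 : E →L[ℂ] E) x) n
        rw [hG', hG, hΓ _ hwc, hΓ w hw, ContinuousLinearMap.one_apply,
          ← mul_assoc, ← mul_pow, mul_comm ((starRingEnd ℂ) w) w, hconj1 w hw, one_pow, one_mul]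
      exact ⟨⟨G, G', h1, h2⟩, fun x => hG x, fun x => hG' x⟩
    -- rotation invariance of the spectra
    have hrotS : ∀ ζ : ℂ, ‖ζ‖ = 1 → spectrum ℂ (ζ • Sop) = spectrum ℂ Sop := by
      intro ζ hζ
      obtain ⟨u, hu1, hu2⟩ := hunit ζ hζ
      have hwc : ‖(starRingEnd ℂ) ζ‖ = 1 := by rw [RCLike.norm_conj]; exact hζ
      have hconj : (u : E →L[ℂ] E) * Sop * (↑u⁻¹ : E →L[ℂ] E) = ζ • Sop := by
        apply extE; intro x n
        have happ : ((u : E →L[ℂ] E) * Sop * (↑u⁻¹ : E →L[ℂ] E)) x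
            = Γ ζ (Sop (Γ ((starRingEnd ℂ) ζ) x)) := by
          rw [ContinuousLinearMap.mul_apply, ContinuousLinearMap.mul_apply, hu1, hu2]
        rw [happ]
        have hsm : ι ((ζ • Sop) x) n = ζ * ι (Sop x) n := by
          rw [ContinuousLinearMap.smul_apply, map_smul, Pi.smul_apply, smul_eq_mul]
        rw [hsm]
        cases n with
        | zero =>
          rw [hΓ ζ hζ, hS0, hS0]
          ring
        | succ n =>
          rw [hΓ ζ hζ, hSn, hSn, hΓ _ hwc]
          have : ζ ^ (n + 1) * ((starRingEnd ℂ) ζ ^ n * ι x n)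
              = (ζ * (starRingEnd ℂ) ζ) ^ n * (ζ * ι x n) := by ring
          rw [this, hconj1 ζ hζ, one_pow, one_mul]
      rw [← hconj, spectrum.units_conjugate]
    have hrotM : ∀ ζ : ℂ, ‖ζ‖ = 1 → spectrum ℂ (ζ • Mop) = spectrum ℂ Mop := by
      intro ζ hζ
      have hwc : ‖(starRingEnd ℂ) ζ‖ = 1 := by rw [RCLike.norm_conj]; exact hζ
      obtain ⟨u, hu1, hu2⟩ := hunit _ hwc
      have hconj : (u : E →L[ℂ] E) * Mop * (↑u⁻¹ : E →L[ℂ] E) = ζ • Mop := by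
        apply extE; intro x n
        have happ : ((u : E →L[ℂ] E) * Mop * (↑u⁻¹ : E →L[ℂ] E)) x
            = Γ ((starRingEnd ℂ) ζ) (Mop (Γ ((starRingEnd ℂ) ((starRingEnd ℂ) ζ)) x)) := by
          rw [ContinuousLinearMap.mul_apply, ContinuousLinearMap.mul_apply, hu1, hu2]
        rw [happ, Complex.conj_conj]
        have hsm : ι ((ζ • Mop) x) n = ζ * ι (Mop x) n := by
          rw [ContinuousLinearMap.smul_apply, map_smul, Pi.smul_apply, smul_eq_mul]
        rw [hsm, hΓ _ hwc, hMop, hΓ ζ hζ, hMop]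
        have : (starRingEnd ℂ) ζ ^ n * (ζ ^ (n + 1) * ι x (n + 1))
            = (ζ * (starRingEnd ℂ) ζ) ^ n * (ζ * ι x (n + 1)) := by ring
        rw [this, hconj1 ζ hζ, one_pow, one_mul]
      rw [← hconj, spectrum.units_conjugate]
    -- boundary bound, S side
    have hboundS : ∀ w : ℂ, w ≠ 0 → (‖w‖₊ : ℝ≥0∞) = ρS →
        ‖∑ j ∈ φ.support, φ j * w ^ j‖ ≤ ‖Tφ‖ := by
      intro w hw0 hw
      set Pop : E →L[ℂ] E := ∑ j ∈ φ.support, φ j • Sop ^ (j + (Dn : ℤ)).toNat with hPop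
      set PS : Polynomial ℂ :=
        ∑ j ∈ φ.support, Polynomial.C (φ j) * Polynomial.X ^ (j + (Dn : ℤ)).toNat with hPS
      have haev : Polynomial.aeval Sop PS = Pop := by
        rw [hPS, map_sum, hPop]
        apply Finset.sum_congr rfl
        intro j hj
        rw [map_mul, Polynomial.aeval_C, map_pow, Polynomial.aeval_X,
          Algebra.algebraMap_eq_smul_one, smul_mul_assoc, one_mul]
      have hTS : Tφ * Sop ^ Dn = Pop := by
        rw [hTφ, hPop, Finset.sum_mul]
        apply Finset.sum_congr rfl
        intro j hj
        rw [smul_mul_assoc]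
        congr 1
        rw [hop]
        by_cases h0 : 0 ≤ j
        · simp only [if_pos h0]
          rw [← pow_add]
          congr 1
          omega
        · simp only [if_neg h0]
          rw [hMpow_S _ _ (hDnle j hj)]
          congr 1
          omega
      have hcommP : ∀ k : ℕ, Pop * Sop ^ k = Sop ^ k * Pop := by
        intro k
        rw [hPop, Finset.sum_mul, Finset.mul_sum]
        apply Finset.sum_congr rfl
        intro j hj
        rw [smul_mul_assoc, mul_smul_comm, ← pow_add, ← pow_add, Nat.add_comm]
      have hPopN : ∀ N : ℕ, Pop ^ N = Tφ ^ N * Sop ^ (N * Dn) := by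
        intro N
        induction N with
        | zero => simp
        | succ N ih =>
          have h1 : Tφ ^ (N + 1) * Sop ^ ((N + 1) * Dn)
              = Tφ ^ N * ((Tφ * Sop ^ Dn) * Sop ^ (N * Dn)) := by
            rw [show (N + 1) * Dn = Dn + N * Dn by ring, pow_add Sop Dn (N * Dn),
              pow_succ Tφ N, mul_assoc, mul_assoc]
          rw [h1, hTS, hcommP, ← mul_assoc, ← ih, ← pow_succ]
      have hnormP : ∀ N : ℕ, ‖Pop ^ N‖₊ ≤ ‖Tφ‖₊ ^ N * ‖Sop ^ (N * Dn)‖₊ := by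
        intro N
        rw [hPopN]
        calc ‖Tφ ^ N * Sop ^ (N * Dn)‖₊ ≤ ‖Tφ ^ N‖₊ * ‖Sop ^ (N * Dn)‖₊ := nnnorm_mul_le _ _
          _ ≤ ‖Tφ‖₊ ^ N * ‖Sop ^ (N * Dn)‖₊ := by gcongr; exact nnnorm_pow_le _ _
      have hsr : spectralRadius ℂ Pop ≤ (‖Tφ‖₊ : ℝ≥0∞) * ρS ^ Dn :=
        aux_specBound Pop Tφ Sop Dn hnormP
      have hwspec : w ∈ spectrum ℂ Sop := aux_circle_spec Sop hrotS w hw hw0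
      have hmem : Polynomial.eval w PS ∈ spectrum ℂ Pop := by
        rw [← haev]
        exact spectrum.subset_polynomial_aeval Sop PS ⟨w, hwspec, rfl⟩
      have heval : Polynomial.eval w PS = w ^ Dn * ∑ j ∈ φ.support, φ j * w ^ j := by
        rw [hPS, Polynomial.eval_finset_sum, Finset.mul_sum]
        apply Finset.sum_congr rfl
        intro j hj
        rw [Polynomial.eval_mul, Polynomial.eval_C, Polynomial.eval_pow, Polynomial.eval_X]
        have hexp : w ^ ((j + (Dn : ℤ)).toNat) = w ^ (Dn : ℕ) * w ^ j := by
          have hge : (-j).toNat ≤ Dn := hDnle j hj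
          calc w ^ ((j + (Dn : ℤ)).toNat) = w ^ (((j + (Dn : ℤ)).toNat : ℤ)) :=
                (zpow_natCast w _).symm
            _ = w ^ (j + (Dn : ℤ)) := by rw [show (((j + (Dn : ℤ)).toNat : ℤ)) = j + (Dn : ℤ) by omega]
            _ = w ^ j * w ^ ((Dn : ℤ)) := zpow_add₀ hw0 _ _
            _ = w ^ (Dn : ℕ) * w ^ j := by rw [zpow_natCast]; ring
        rw [hexp]
        ring
      rw [heval] at hmem
      have h1 : (‖w ^ Dn * ∑ j ∈ φ.support, φ j * w ^ j‖₊ : ℝ≥0∞) ≤ spectralRadius ℂ Pop :=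
        hmem_le _ _ hmem
      have h2 : ((‖w‖₊ : ℝ≥0∞) ^ Dn) * (‖∑ j ∈ φ.support, φ j * w ^ j‖₊ : ℝ≥0∞)
          ≤ (‖Tφ‖₊ : ℝ≥0∞) * ((‖w‖₊ : ℝ≥0∞) ^ Dn) := by
        have hnn : (‖w ^ Dn * ∑ j ∈ φ.support, φ j * w ^ j‖₊ : ℝ≥0∞)
            = ((‖w‖₊ : ℝ≥0∞) ^ Dn) * (‖∑ j ∈ φ.support, φ j * w ^ j‖₊ : ℝ≥0∞) := by
          rw [nnnorm_mul, nnnorm_pow]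
          push_cast
          ring
        rw [← hnn, hw]
        exact h1.trans hsr
      have hc0 : ((‖w‖₊ : ℝ≥0∞) ^ Dn) ≠ 0 := by
        apply pow_ne_zero
        simpa using hw0
      have hctop : ((‖w‖₊ : ℝ≥0∞) ^ Dn) ≠ ⊤ := by
        apply ENNReal.pow_ne_top ENNReal.coe_ne_top
      rw [mul_comm ((‖w‖₊ : ℝ≥0∞) ^ Dn)] at h2
      have h3 : (‖∑ j ∈ φ.support, φ j * w ^ j‖₊ : ℝ≥0∞) ≤ (‖Tφ‖₊ : ℝ≥0∞) :=
        (ENNReal.mul_le_mul_iff_left hc0 hctop).mp h2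
      have h4 : ‖∑ j ∈ φ.support, φ j * w ^ j‖₊ ≤ ‖Tφ‖₊ := by exact_mod_cast h3
      exact_mod_cast h4
    -- boundary bound, M side
    have hboundM : ∀ w : ℂ, w ≠ 0 → (‖w‖₊ : ℝ≥0∞) = ρM →
        ‖∑ j ∈ φ.support, φ j * (w⁻¹) ^ j‖ ≤ ‖Tφ‖ := by
      intro w hw0 hw
      set Qop : E →L[ℂ] E := ∑ j ∈ φ.support, φ j • Mop ^ ((Dp : ℤ) - j).toNat with hQop
      set QS : Polynomial ℂ :=
        ∑ j ∈ φ.support, Polynomial.C (φ j) * Polynomial.X ^ ((Dp : ℤ) - j).toNat with hQS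
      have haev : Polynomial.aeval Mop QS = Qop := by
        rw [hQS, map_sum, hQop]
        apply Finset.sum_congr rfl
        intro j hj
        rw [map_mul, Polynomial.aeval_C, map_pow, Polynomial.aeval_X,
          Algebra.algebraMap_eq_smul_one, smul_mul_assoc, one_mul]
      have hMT : Mop ^ Dp * Tφ = Qop := by
        rw [hTφ, hQop, Finset.mul_sum]
        apply Finset.sum_congr rfl
        intro j hj
        rw [mul_smul_comm]
        congr 1
        rw [hop]
        by_cases h0 : 0 ≤ j
        · simp only [if_pos h0]
          rw [hM_Spow _ _ (hDple j hj)]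
          congr 1
          omega
        · simp only [if_neg h0]
          rw [← pow_add]
          congr 1
          omega
      have hcommQ : ∀ k : ℕ, Qop * Mop ^ k = Mop ^ k * Qop := by
        intro k
        rw [hQop, Finset.sum_mul, Finset.mul_sum]
        apply Finset.sum_congr rfl
        intro j hj
        rw [smul_mul_assoc, mul_smul_comm, ← pow_add, ← pow_add, Nat.add_comm]
      have hQopN : ∀ N : ℕ, Qop ^ N = Mop ^ (N * Dp) * Tφ ^ N := by
        intro N
        induction N with
        | zero => simp
        | succ N ih =>
          have h1 : Mop ^ ((N + 1) * Dp) * Tφ ^ (N + 1)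
              = Mop ^ (N * Dp) * ((Mop ^ Dp * Tφ) * Tφ ^ N) := by
            rw [show (N + 1) * Dp = N * Dp + Dp by ring, pow_add Mop (N * Dp) Dp,
              pow_succ' Tφ N, mul_assoc, mul_assoc]
          rw [h1, hMT, ← mul_assoc, ← hcommQ, mul_assoc, ← ih, ← pow_succ']
      have hnormQ : ∀ N : ℕ, ‖Qop ^ N‖₊ ≤ ‖Tφ‖₊ ^ N * ‖Mop ^ (N * Dp)‖₊ := by
        intro N
        rw [hQopN]
        calc ‖Mop ^ (N * Dp) * Tφ ^ N‖₊ ≤ ‖Mop ^ (N * Dp)‖₊ * ‖Tφ ^ N‖₊ := nnnorm_mul_le _ _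
          _ ≤ ‖Mop ^ (N * Dp)‖₊ * ‖Tφ‖₊ ^ N := by gcongr; exact nnnorm_pow_le _ _
          _ = ‖Tφ‖₊ ^ N * ‖Mop ^ (N * Dp)‖₊ := mul_comm _ _
      have hsr : spectralRadius ℂ Qop ≤ (‖Tφ‖₊ : ℝ≥0∞) * ρM ^ Dp :=
        aux_specBound Qop Tφ Mop Dp hnormQ
      have hwspec : w ∈ spectrum ℂ Mop := aux_circle_spec Mop hrotM w hw hw0
      have hmem : Polynomial.eval w QS ∈ spectrum ℂ Qop := by
        rw [← haev]
        exact spectrum.subset_polynomial_aeval Mop QS ⟨w, hwspec, rfl⟩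
      have heval : Polynomial.eval w QS = w ^ Dp * ∑ j ∈ φ.support, φ j * (w⁻¹) ^ j := by
        rw [hQS, Polynomial.eval_finset_sum, Finset.mul_sum]
        apply Finset.sum_congr rfl
        intro j hj
        rw [Polynomial.eval_mul, Polynomial.eval_C, Polynomial.eval_pow, Polynomial.eval_X]
        have hexp : w ^ (((Dp : ℤ) - j).toNat) = w ^ (Dp : ℕ) * (w⁻¹) ^ j := by
          have hge : j.toNat ≤ Dp := hDple j hj
          calc w ^ (((Dp : ℤ) - j).toNat) = w ^ ((((Dp : ℤ) - j).toNat : ℤ)) :=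
                (zpow_natCast w _).symm
            _ = w ^ ((Dp : ℤ) - j) := by
                rw [show ((((Dp : ℤ) - j).toNat : ℤ)) = (Dp : ℤ) - j by omega]
            _ = w ^ ((Dp : ℤ) + (-j)) := by
                rw [show (Dp : ℤ) - j = (Dp : ℤ) + (-j) by ring]
            _ = w ^ ((Dp : ℤ)) * w ^ (-j) := zpow_add₀ hw0 _ _
            _ = w ^ (Dp : ℕ) * (w⁻¹) ^ j := by
                rw [zpow_natCast, zpow_neg, ← inv_zpow]
        rw [hexp]
        ring
      rw [heval] at hmem
      have h1 : (‖w ^ Dp * ∑ j ∈ φ.support, φ j * (w⁻¹) ^ j‖₊ : ℝ≥0∞) ≤ spectralRadius ℂ Qop :=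
        hmem_le _ _ hmem
      have h2 : ((‖w‖₊ : ℝ≥0∞) ^ Dp) * (‖∑ j ∈ φ.support, φ j * (w⁻¹) ^ j‖₊ : ℝ≥0∞)
          ≤ (‖Tφ‖₊ : ℝ≥0∞) * ((‖w‖₊ : ℝ≥0∞) ^ Dp) := by
        have hnn : (‖w ^ Dp * ∑ j ∈ φ.support, φ j * (w⁻¹) ^ j‖₊ : ℝ≥0∞)
            = ((‖w‖₊ : ℝ≥0∞) ^ Dp) * (‖∑ j ∈ φ.support, φ j * (w⁻¹) ^ j‖₊ : ℝ≥0∞) := by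
          rw [nnnorm_mul, nnnorm_pow]
          push_cast
          ring
        rw [← hnn, hw]
        exact h1.trans hsr
      have hc0 : ((‖w‖₊ : ℝ≥0∞) ^ Dp) ≠ 0 := by
        apply pow_ne_zero
        simpa using hw0
      have hctop : ((‖w‖₊ : ℝ≥0∞) ^ Dp) ≠ ⊤ := by
        apply ENNReal.pow_ne_top ENNReal.coe_ne_top
      rw [mul_comm ((‖w‖₊ : ℝ≥0∞) ^ Dp)] at h2
      have h3 : (‖∑ j ∈ φ.support, φ j * (w⁻¹) ^ j‖₊ : ℝ≥0∞) ≤ (‖Tφ‖₊ : ℝ≥0∞) :=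
        (ENNReal.mul_le_mul_iff_left hc0 hctop).mp h2
      have h4 : ‖∑ j ∈ φ.support, φ j * (w⁻¹) ^ j‖₊ ≤ ‖Tφ‖₊ := by exact_mod_cast h3
      exact_mod_cast h4
    -- real radii
    set rS : ℝ := ρS.toReal with hrSdef
    set rM : ℝ := ρM.toReal with hrMdef
    have hrSpos : 0 < rS := ENNReal.toReal_pos hρS0 hρSfin
    have hrMpos : 0 < rM := ENNReal.toReal_pos hρM0 hρMfin
    have hcoe : ∀ w : ℂ, ‖w‖ = rS → (‖w‖₊ : ℝ≥0∞) = ρS := by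
      intro w hwn
      rw [← enorm_eq_nnnorm, ← ofReal_norm, hwn, hrSdef, ENNReal.ofReal_toReal hρSfin]
    have hcoeM : ∀ w : ℂ, ‖w‖ = rM → (‖w‖₊ : ℝ≥0∞) = ρM := by
      intro w hwn
      rw [← enorm_eq_nnnorm, ← ofReal_norm, hwn, hrMdef, ENNReal.ofReal_toReal hρMfin]
    have hzrS : ‖z‖ ≤ rS := by
      have := ENNReal.toReal_mono hρSfin hz2
      simpa using this
    have hzrM : rM⁻¹ ≤ ‖z‖ := by
      have := ENNReal.toReal_mono ENNReal.coe_ne_top hz1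
      rw [ENNReal.toReal_inv] at this
      simpa using this
    have hbS' : ∀ w : ℂ, ‖w‖ = rS → ‖∑ j ∈ φ.support, φ j * w ^ j‖ ≤ ‖Tφ‖ := by
      intro w hwn
      have hw0 : w ≠ 0 := by
        intro h
        rw [h, norm_zero] at hwn
        exact hrSpos.ne hwn
      exact hboundS w hw0 (hcoe w hwn)
    have hbM' : ∀ w : ℂ, ‖w‖ = rM⁻¹ → ‖∑ j ∈ φ.support, φ j * w ^ j‖ ≤ ‖Tφ‖ := by
      intro w hwn
      have hw0 : w ≠ 0 := by
        intro h
        rw [h, norm_zero] at hwn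
        exact (inv_pos.mpr hrMpos).ne hwn
      have hwi : ‖w⁻¹‖ = rM := by
        rw [norm_inv, hwn, inv_inv]
      have := hboundM w⁻¹ (inv_ne_zero hw0) (hcoeM _ hwi)
      simpa [inv_inv] using this
    -- three cases
    rcases eq_or_lt_of_le hzrS with heq | hltS
    · exact hbS' z heq
    rcases eq_or_lt_of_le hzrM with heq2 | hltM
    · exact hbM' z heq2.symm
    -- interior : maximum modulus principle
    set U : Set ℂ := {w : ℂ | rM⁻¹ < ‖w‖ ∧ ‖w‖ < rS} with hU
    have hUopen : IsOpen U := by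
      have : U = (fun w : ℂ => ‖w‖) ⁻¹' (Set.Ioo rM⁻¹ rS) := rfl
      rw [this]
      exact isOpen_Ioo.preimage continuous_norm
    have hUb : Bornology.IsBounded U := by
      apply (Metric.isBounded_ball (x := (0 : ℂ)) (r := rS + 1)).subset
      intro w hwU
      rw [Metric.mem_ball, dist_zero_right]
      linarith [hwU.2]
    have hne0 : ∀ w : ℂ, w ∈ closure U → w ≠ 0 := by
      intro w hwc h
      have hle : closure U ⊆ {w : ℂ | rM⁻¹ ≤ ‖w‖} := by
        apply closure_minimal
        · intro v hv
          exact hv.1.le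
        · exact isClosed_le continuous_const continuous_norm
      have h2 : rM⁻¹ ≤ ‖w‖ := hle hwc
      rw [h, norm_zero] at h2
      exact absurd h2 (not_le.mpr (inv_pos.mpr hrMpos))
    have hdiffAt : ∀ w : ℂ, w ≠ 0 →
        DifferentiableAt ℂ (fun v : ℂ => ∑ j ∈ φ.support, φ j * v ^ j) w := by
      intro w hw0
      apply DifferentiableAt.fun_sum
      intro j hj
      exact (differentiableAt_const _).mul (differentiableAt_zpow.mpr (Or.inl hw0))
    have hdc : DiffContOnCl ℂ (fun v : ℂ => ∑ j ∈ φ.support, φ j * v ^ j) U := by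
      constructor
      · intro w hwU
        exact (hdiffAt w (hne0 w (subset_closure hwU))).differentiableWithinAt
      · intro w hwc
        exact (hdiffAt w (hne0 w hwc)).continuousAt.continuousWithinAt
    have hfr : ∀ w ∈ frontier U, ‖∑ j ∈ φ.support, φ j * w ^ j‖ ≤ ‖Tφ‖ := by
      intro w hwf
      have hwc : w ∈ closure U := frontier_subset_closure hwf
      have hnU : w ∉ U := by
        rw [hUopen.frontier_eq] at hwf
        exact hwf.2
      have hmem1 : rM⁻¹ ≤ ‖w‖ ∧ ‖w‖ ≤ rS := by
        have hsub : closure U ⊆ {v : ℂ | rM⁻¹ ≤ ‖v‖ ∧ ‖v‖ ≤ rS} := by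
          apply closure_minimal
          · intro v hv
            exact ⟨hv.1.le, hv.2.le⟩
          · exact IsClosed.inter (isClosed_le continuous_const continuous_norm)
              (isClosed_le continuous_norm continuous_const)
        exact hsub hwc
      rcases eq_or_lt_of_le hmem1.1 with h1 | h1
      · exact hbM' w h1.symm
      rcases eq_or_lt_of_le hmem1.2 with h2 | h2
      · exact hbS' w h2
      · exact absurd ⟨h1, h2⟩ hnU
    exact Complex.norm_le_of_forall_mem_frontier_norm_le hUb hdc hfr
      (subset_closure ⟨hltM, hltS⟩)
end

section
/- Assume 𝐒 is not bounded but 𝐒₋₁ is bounded on 𝐄. Let φ ∈ ℂ^ℤ be finitely supported with φ(n) = 0 for all n > 0. Then the operator T_φ : x ↦ P⁺(φ∗x) maps 𝐄 boundedly into 𝐄, and |φ̃(z)| ≤ ‖T_φ‖ for every z ∈ ℂ with |z| ≥ 1/ρ(𝐒₋₁), where φ̃(z) = Σ_n φ(n) zⁿ (a finite sum) and ‖T_φ‖ is the operator norm of T_φ. -/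
open scoped ENNReal

/-- If `𝐒` is not bounded but `𝐒₋₁` is bounded on `𝐄`, then for every finitely
supported `φ : ℤ → ℂ` with `φ(n) = 0` for `n > 0`, the operator `T_φ : x ↦ P⁺(φ∗x)`
maps `𝐄` boundedly into `𝐄`, and `|φ̃(z)| ≤ ‖T_φ‖` for every `z` with
`|z| ≥ 1/ρ(𝐒₋₁)`. -/
theorem stmt18
    {E : Type*} [NormedAddCommGroup E] [NormedSpace ℂ E] [CompleteSpace E]
    (ι : E →ₗ[ℂ] (ℕ → ℂ)) (hι : Function.Injective ι)
    (e : ℕ → E) (he : ∀ k : ℕ, ι (e k) = Pi.single k 1)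
    (hdense : Dense (Submodule.span ℂ (Set.range e) : Set E))
    (hcoord : ∀ n : ℕ, Continuous fun x : E => ι x n)
    (Γ : ℂ → E → E)
    (hΓ : ∀ z : ℂ, ‖z‖ = 1 → ∀ x : E, ∀ n : ℕ, ι (Γ z x) n = z ^ n * ι x n)
    (hΓbdd : ∃ C : ℝ, ∀ z : ℂ, ‖z‖ = 1 → ∀ x : E, ‖Γ z x‖ ≤ C * ‖x‖)
    -- `𝐒` is not bounded:
    (hSnb : ¬ ∀ x : E, ∃ y : E, ι y 0 = 0 ∧ ∀ n : ℕ, ι y (n + 1) = ι x n)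
    -- `𝐒₋₁` is bounded, with restriction `Mop` to `𝐄`:
    (Mop : E →L[ℂ] E)
    (hMop : ∀ x : E, ∀ n : ℕ, ι (Mop x) n = ι x (n + 1))
    (φ : ℤ →₀ ℂ) (hφ : ∀ n : ℤ, 0 < n → φ n = 0) :
    ∃ Tφ : E →L[ℂ] E,
      (∀ x : E, ∀ m : ℕ, ι (Tφ x) m =
        ∑ j ∈ φ.support, φ j * (if 0 ≤ (m : ℤ) - j then ι x ((m : ℤ) - j).toNat else 0)) ∧
      ∀ z : ℂ, (spectralRadius ℂ Mop)⁻¹ ≤ (‖z‖₊ : ℝ≥0∞) →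
        ‖∑ j ∈ φ.support, φ j * z ^ j‖ ≤ ‖Tφ‖ := by
  classical
  -- `E` is nontrivial
  have he0 : (e 0 : E) ≠ 0 := by
    intro h
    have h1 := he 0
    rw [h, map_zero] at h1
    have h2 := congrFun h1 0
    simp [Pi.single_eq_same] at h2
  haveI : Nontrivial E := ⟨e 0, 0, he0⟩
  obtain ⟨C, hC⟩ := hΓbdd
  -- support of φ lies in nonpositive integers
  have hsupp : ∀ j ∈ φ.support, j ≤ 0 := by
    intro j hj
    by_contra hj0
    exact (Finsupp.mem_support_iff.mp hj) (hφ j (by omega))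
  -- the polynomial p(X) = ∑ φ(j) X^(-j)
  set p : Polynomial ℂ := ∑ j ∈ φ.support, Polynomial.C (φ j) * Polynomial.X ^ ((-j).toNat)
    with hp
  set Tφ : E →L[ℂ] E := ∑ j ∈ φ.support, φ j • Mop ^ ((-j).toNat) with hT
  have hTaeval : Tφ = Polynomial.aeval Mop p := by
    rw [hT, hp, map_sum]
    refine Finset.sum_congr rfl fun j _ => ?_
    rw [map_mul, Polynomial.aeval_C, map_pow, Polynomial.aeval_X, Algebra.smul_def]
  -- coordinate formula for powers of Mop
  have hpow : ∀ (k : ℕ) (x : E) (m : ℕ), ι ((Mop ^ k) x) m = ι x (m + k) := by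
    intro k
    induction k with
    | zero => intro x m; simp
    | succ k ih =>
        intro x m
        rw [pow_succ, ContinuousLinearMap.mul_apply, ih, hMop, ← Nat.add_assoc]
  -- coordinate formula for Tφ
  have hTcoord : ∀ x : E, ∀ m : ℕ, ι (Tφ x) m =
      ∑ j ∈ φ.support, φ j * (if 0 ≤ (m : ℤ) - j then ι x ((m : ℤ) - j).toNat else 0) := by
    intro x m
    rw [hT, ContinuousLinearMap.sum_apply]
    rw [map_sum]
    rw [Finset.sum_apply]
    refine Finset.sum_congr rfl fun j hj => ?_
    have hj0 : j ≤ 0 := hsupp j hj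
    have hif : (0 : ℤ) ≤ (m : ℤ) - j := by omega
    rw [if_pos hif]
    have : ((m : ℤ) - j).toNat = m + (-j).toNat := by omega
    rw [this, ContinuousLinearMap.smul_apply, map_smul, Pi.smul_apply, hpow,
      smul_eq_mul]
  refine ⟨Tφ, hTcoord, ?_⟩
  -- the spectral estimate
  intro z hz
  set ρ := spectralRadius ℂ Mop with hρ
  have hρfin : ρ ≠ ⊤ :=
    ne_top_of_le_ne_top ENNReal.coe_ne_top (spectrum.spectralRadius_le_nnnorm (𝕜 := ℂ) (a := Mop))
  have hρ0 : ρ ≠ 0 := by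
    intro h0
    rw [h0, ENNReal.inv_zero, top_le_iff] at hz
    exact ENNReal.coe_ne_top hz
  have hz0 : z ≠ 0 := by
    intro h0
    rw [h0, nnnorm_zero, ENNReal.coe_zero, le_zero_iff, ENNReal.inv_eq_zero] at hz
    exact hρfin hz
  set R := ρ.toReal with hRdef
  have hR0 : 0 < R := ENNReal.toReal_pos hρ0 hρfin
  set w := z⁻¹ with hwdef
  -- ‖w‖ ≤ R
  have hwle : ‖w‖ ≤ R := by
    have h1 : ((‖z‖₊ : ℝ≥0∞))⁻¹ ≤ ρ := ENNReal.inv_le_iff_inv_le.mp hz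
    have h2 : (‖w‖₊ : ℝ≥0∞) ≤ ρ := by
      rw [hwdef, nnnorm_inv, ENNReal.coe_inv (by simpa using hz0)]
      exact h1
    have h3 := ENNReal.toReal_mono hρfin h2
    simpa [coe_nnnorm] using h3
  -- constructing the rotation operators
  have mkG : ∀ c : ℂ, ‖c‖ = 1 → ∃ G : E →L[ℂ] E, ∀ x, G x = Γ c x := by
    intro c hc
    refine ⟨LinearMap.mkContinuousOfExistsBound
      { toFun := Γ c
        map_add' := ?_
        map_smul' := ?_ } ⟨C, fun x => hC c hc x⟩, fun x => rfl⟩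
    · intro x y
      apply hι
      funext n
      rw [map_add, Pi.add_apply, hΓ c hc, hΓ c hc, hΓ c hc, map_add, Pi.add_apply, mul_add]
    · intro a x
      apply hι
      funext n
      rw [RingHom.id_apply, map_smul, Pi.smul_apply, hΓ c hc, hΓ c hc, map_smul,
        Pi.smul_apply, smul_eq_mul, smul_eq_mul]
      ring
  -- rotation invariance of the spectrum
  have hrot : ∀ c : ℂ, ‖c‖ = 1 → spectrum ℂ (c • Mop) = spectrum ℂ Mop := by
    intro c hc
    have hcb : ‖(starRingEnd ℂ) c‖ = 1 := by rwa [RingHomIsometric.norm_map]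
    obtain ⟨G, hG⟩ := mkG ((starRingEnd ℂ) c) hcb
    obtain ⟨Gb, hGb⟩ := mkG c hc
    have hmulconj : (starRingEnd ℂ) c * c = 1 := by
      rw [mul_comm, Complex.mul_conj, Complex.normSq_eq_norm_sq, hc]
      norm_num
    have hGGb : G * Gb = 1 := by
      ext x
      apply hι
      funext n
      rw [ContinuousLinearMap.mul_apply, hG, hGb, hΓ _ hcb, hΓ _ hc,
        ContinuousLinearMap.one_apply, ← mul_assoc, ← mul_pow, hmulconj, one_pow, one_mul]
    have hGbG : Gb * G = 1 := by
      ext x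
      apply hι
      funext n
      rw [ContinuousLinearMap.mul_apply, hGb, hG, hΓ _ hc, hΓ _ hcb,
        ContinuousLinearMap.one_apply, ← mul_assoc, ← mul_pow, mul_comm c,
        hmulconj, one_pow, one_mul]
    set u : (E →L[ℂ] E)ˣ := ⟨G, Gb, hGGb, hGbG⟩ with hu
    have hconj : (u : E →L[ℂ] E) * Mop * (↑u⁻¹ : E →L[ℂ] E) = c • Mop := by
      ext x
      apply hι
      funext n
      show ι (G (Mop (Gb x))) n = ι ((c • Mop) x) n
      rw [hG, hΓ _ hcb, hMop, hGb, hΓ _ hc, ContinuousLinearMap.smul_apply, map_smul,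
        Pi.smul_apply, hMop, smul_eq_mul]
      rw [pow_succ, ← mul_assoc, ← mul_assoc, ← mul_pow,
        hmulconj, one_pow, one_mul]
    rw [← hconj, spectrum.units_conjugate]
  -- the circle of radius R is contained in the spectrum
  obtain ⟨lam, hlam_mem, hlam_norm⟩ := spectrum.exists_nnnorm_eq_spectralRadius (a := Mop)
  have hlamR : ‖lam‖ = R := by
    have hx : ρ = (‖lam‖₊ : ℝ≥0∞) := by rw [hρ, ← hlam_norm]
    rw [hRdef, hx, ENNReal.coe_toReal, coe_nnnorm]
  have hlam0 : lam ≠ 0 := by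
    intro h
    rw [h, norm_zero] at hlamR
    exact hR0.ne hlamR
  have hcircle : ∀ v : ℂ, ‖v‖ = R → v ∈ spectrum ℂ Mop := by
    intro v hv
    have hc1 : ‖v / lam‖ = 1 := by
      rw [norm_div, hv, hlamR, div_self hR0.ne']
    have hc0 : v / lam ≠ 0 := by
      intro h
      rw [h, norm_zero] at hc1
      norm_num at hc1
    have h1 : spectrum ℂ ((v / lam) • Mop) = spectrum ℂ Mop := hrot _ hc1
    have h2 : (Units.mk0 (v / lam) hc0) • lam
        ∈ spectrum ℂ ((Units.mk0 (v / lam) hc0) • Mop) :=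
      spectrum.smul_mem_smul_iff.mpr hlam_mem
    have h3 : ((Units.mk0 (v / lam) hc0) • Mop : E →L[ℂ] E) = (v / lam) • Mop := rfl
    have h4 : (Units.mk0 (v / lam) hc0) • lam = v := by
      rw [Units.smul_def, smul_eq_mul]
      show v / lam * lam = v
      exact div_mul_cancel₀ _ hlam0
    rw [h3, h1, h4] at h2
    exact h2
  -- on the sphere of radius R, |p(v)| ≤ ‖Tφ‖
  have hsphere : ∀ v : ℂ, ‖v‖ = R → ‖p.eval v‖ ≤ ‖Tφ‖ := by
    intro v hv
    have hmem : p.eval v ∈ spectrum ℂ (Polynomial.aeval Mop p) :=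
      spectrum.subset_polynomial_aeval Mop p ⟨v, hcircle v hv, rfl⟩
    rw [← hTaeval] at hmem
    exact spectrum.norm_le_norm_of_mem hmem
  -- maximum modulus principle
  have hkey : ‖p.eval w‖ ≤ ‖Tφ‖ := by
    refine Complex.norm_le_of_forall_mem_frontier_norm_le (U := Metric.ball (0 : ℂ) R)
      Metric.isBounded_ball (Polynomial.differentiable p).diffContOnCl ?_ ?_
    · rw [frontier_ball _ hR0.ne']
      intro v hv
      exact hsphere v (by simpa [mem_sphere_iff_norm] using hv)
    · rw [closure_ball _ hR0.ne']
      simpa [Metric.mem_closedBall, dist_zero_right] using hwle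
  -- identify the sum with p.eval w
  have heval : ∑ j ∈ φ.support, φ j * z ^ j = p.eval w := by
    rw [hp, Polynomial.eval_finset_sum]
    refine Finset.sum_congr rfl fun j hj => ?_
    rw [Polynomial.eval_mul, Polynomial.eval_C, Polynomial.eval_pow, Polynomial.eval_X]
    congr 1
    have hj0 : j ≤ 0 := hsupp j hj
    rw [hwdef, inv_pow, ← zpow_natCast z ((-j).toNat), ← zpow_neg]
    congr 1
    omega
  rw [heval]
  exact hkey
end
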